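/- Let X be a measurable space and μ₁, μ₂ probability measures on X such that dp(ε,δ)(Eq)(μ₁, μ₂) holds, where Eq = {(x, y) ∈ X × X | x = y}. Then for every measurable set S ⊆ X, μ₁ S ≤ exp(ε)·μ₂ S + δ; that is, the pair (μ₁, μ₂) satisfies the standard (ε,δ)-differential-privacy closeness condition on measurable events. -/

import Mathlib

open MeasureTheory ENNReal

/-- The `(ε,δ)`-closeness condition on distributions over `Bool`:
`ν₁ {false} ≤ exp ε · ν₂ {false} + δ`. -/
def Scond (ε δ : NNReal) (ν₁ ν₂ : Measure Bool) : Prop :=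
  ν₁ {false} ≤ ENNReal.ofReal (Real.exp ε) * ν₂ {false} + δ

/-- The graded relational lifting for differential privacy. -/
def dp {X Y : Type*} [MeasurableSpace X] [MeasurableSpace Y]
    (ε δ : NNReal) (R : Set (X × Y)) (μ₁ : Measure X) (μ₂ : Measure Y) : Prop :=
  ∀ (ε' δ' : NNReal) (f : X → Measure Bool) (g : Y → Measure Bool),
    Measurable f → Measurable g →
    (∀ x, IsProbabilityMeasure (f x)) → (∀ y, IsProbabilityMeasure (g y)) →
    (∀ x y, (x, y) ∈ R → Scond ε' δ' (f x) (g y)) →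
    Scond (ε + ε') (δ + δ') (μ₁.bind f) (μ₂.bind g)

/-- The lifting at the equality relation entails the standard
(ε,δ)-differential-privacy closeness condition on measurable events. -/
theorem dp_eq_event_bound {X : Type*} [MeasurableSpace X] (ε δ : NNReal)
    (μ₁ μ₂ : Measure X) [IsProbabilityMeasure μ₁] [IsProbabilityMeasure μ₂]
    (h : dp ε δ {p : X × X | p.1 = p.2} μ₁ μ₂)
    (S : Set X) (hS : MeasurableSet S) :
    μ₁ S ≤ ENNReal.ofReal (Real.exp ε) * μ₂ S + δ := by
  classical
  set f : X → Measure Bool := fun x => if x ∈ S then Measure.dirac false else Measure.dirac true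
    with hf
  have hmf : Measurable f := by
    apply Measurable.ite hS <;> exact measurable_const
  have hprob : ∀ x, IsProbabilityMeasure (f x) := by
    intro x
    by_cases hx : x ∈ S <;> simp [hf, hx] <;> infer_instance
  have hcond : ∀ x y : X, (x, y) ∈ {p : X × X | p.1 = p.2} → Scond 0 0 (f x) (f y) := by
    intro x y hxy
    simp only [Set.mem_setOf_eq] at hxy
    subst hxy
    simp [Scond]
  have key := h 0 0 f f hmf hmf hprob hprob hcond
  simp only [Scond, add_zero] at key
  have hbind : ∀ μ : Measure X, (μ.bind f) {false} = μ S := by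
    intro μ
    rw [Measure.bind_apply (by simp) hmf.aemeasurable]
    have : ∀ x, f x {false} = S.indicator (fun _ => (1 : ℝ≥0∞)) x := by
      intro x
      by_cases hx : x ∈ S <;> simp [hf, hx]
    simp_rw [this]
    simp [lintegral_indicator hS]
  rw [hbind μ₁, hbind μ₂] at key
  exact key
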